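/- Let S and T be semirings, L a right S-semimodule, K a (T,S)-bisemimodule and Q a right T-semimodule. If Q is mono-flat as a right T-semimodule (i.e., for every injective morphism of left T-semimodules f : X → Y, the induced map Q ⊗_T X → Q ⊗_T Y is injective) and L is a finitely generated right S-semimodule, then the canonical map υ : Q ⊗_T Hom_S(L, K) → Hom_S(L, Q ⊗_T K), q ⊗ h ↦ (l ↦ q ⊗ h(l)), is injective. -/

import Mathlib

/-!
STATEMENT 2: Let `S` and `T` be (not necessarily commutative) semirings, `L` a
right `S`-semimodule, `K` a `(T,S)`-bisemimodule and `Q` a right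
`T`-semimodule.  If `Q` is mono-flat (the functor `Q ⊗_T -` preserves
injective maps of left `T`-semimodules) and `L` is finitely generated, then
the canonical map `υ : Q ⊗_T Hom_S(L,K) → Hom_S(L, Q ⊗_T K)`,
`q ⊗ h ↦ (l ↦ q ⊗ h l)`, is injective.

Since Mathlib has no tensor product over a noncommutative semiring, we
construct the balanced tensor product `Q ⊗_T K` as the quotient of the
ℕ-tensor product `Q ⊗[ℕ] K` by the additive congruence generated by
`(q·t) ⊗ k ∼ q ⊗ (t·k)`.  Right semimodules are realized as modules over the
opposite semiring.
-/

open TensorProduct MulOpposite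

section Balanced

variable (T : Type*) [Semiring T]
variable (Q : Type*) [AddCommMonoid Q] [Module Tᵐᵒᵖ Q]

/-- The additive congruence on `Q ⊗[ℕ] K` identifying `(q·t) ⊗ k` with
`q ⊗ (t·k)`. -/
def balancedCon (K : Type*) [AddCommMonoid K] [Module T K] : AddCon (Q ⊗[ℕ] K) :=
  addConGen fun x y => ∃ (q : Q) (t : T) (k : K),
    x = (op t • q) ⊗ₜ[ℕ] k ∧ y = q ⊗ₜ[ℕ] (t • k)

/-- The balanced tensor product `Q ⊗_T K` of a right `T`-semimodule `Q` and a
left `T`-semimodule `K`. -/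
abbrev BalancedTensor (K : Type*) [AddCommMonoid K] [Module T K] : Type _ :=
  (balancedCon T Q K).Quotient

/-- The map `Q ⊗_T X → Q ⊗_T Y` induced by a `T`-linear map `f : X → Y`. -/
noncomputable def balancedCongr {X Y : Type*} [AddCommMonoid X] [Module T X]
    [AddCommMonoid Y] [Module T Y] (f : X →ₗ[T] Y) :
    BalancedTensor T Q X →+ BalancedTensor T Q Y :=
  AddCon.lift _
    ((AddCon.mk' (balancedCon T Q Y)).comp
      (LinearMap.lTensor Q f.toAddMonoidHom.toNatLinearMap).toAddMonoidHom) <| by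
    refine AddCon.addConGen_le.2 ?_
    rintro x y ⟨q, t, k, rfl, rfl⟩
    show (AddCon.mk' (balancedCon T Q Y))
        (LinearMap.lTensor Q f.toAddMonoidHom.toNatLinearMap ((op t • q) ⊗ₜ[ℕ] k)) =
      (AddCon.mk' (balancedCon T Q Y))
        (LinearMap.lTensor Q f.toAddMonoidHom.toNatLinearMap (q ⊗ₜ[ℕ] (t • k)))
    rw [LinearMap.lTensor_tmul, LinearMap.lTensor_tmul]
    refine (AddCon.eq _).2 ?_
    exact AddConGen.Rel.of _ _
      ⟨q, t, f k, rfl, congrArg (fun z => q ⊗ₜ[ℕ] z) (f.map_smul t k)⟩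

end Balanced

section Upsilon

variable (T : Type*) [Semiring T] (S : Type*) [Semiring S]
variable (Q : Type*) [AddCommMonoid Q] [Module Tᵐᵒᵖ Q]
variable (L : Type*) [AddCommMonoid L] [Module Sᵐᵒᵖ L]
variable (K : Type*) [AddCommMonoid K] [Module T K] [Module Sᵐᵒᵖ K]
  [SMulCommClass Sᵐᵒᵖ T K]

/-- The canonical map `υ : Q ⊗_T Hom_S(L,K) → (L → Q ⊗_T K)`,
`q ⊗ h ↦ (l ↦ q ⊗ h l)`.  (Its values are in fact right `S`-linear, so this
is the canonical map `Q ⊗_T Hom_S(L,K) → Hom_S(L, Q ⊗_T K)`.) -/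
noncomputable def upsilonFun :
    BalancedTensor T Q (L →ₗ[Sᵐᵒᵖ] K) →+ (L → BalancedTensor T Q K) :=
  AddCon.lift _
    (TensorProduct.liftAddHom
      { toFun := fun q =>
          { toFun := fun h l => (balancedCon T Q K).mk' (q ⊗ₜ[ℕ] h l)
            map_zero' := by
              funext l
              simp only [LinearMap.zero_apply, tmul_zero, map_zero, Pi.zero_apply]
            map_add' := fun h h' => by
              funext l
              simp only [LinearMap.add_apply, tmul_add, map_add, Pi.add_apply] }
        map_zero' := by
          refine AddMonoidHom.ext fun h => ?_
          funext l
          simp only [AddMonoidHom.coe_mk, ZeroHom.coe_mk, zero_tmul, map_zero,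
            AddMonoidHom.zero_apply, Pi.zero_apply]
        map_add' := fun q q' => by
          refine AddMonoidHom.ext fun h => ?_
          funext l
          simp only [AddMonoidHom.coe_mk, ZeroHom.coe_mk, add_tmul, map_add,
            AddMonoidHom.add_apply, Pi.add_apply] }
      (fun r q h => by
        funext l
        simp only [AddMonoidHom.coe_mk, ZeroHom.coe_mk, LinearMap.smul_apply,
          smul_tmul])) <| by
    refine AddCon.addConGen_le.2 ?_
    rintro x y ⟨q, t, h, rfl, rfl⟩
    show _ = _
    rw [TensorProduct.liftAddHom_tmul, TensorProduct.liftAddHom_tmul]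
    funext l
    refine (AddCon.eq _).2 ?_
    exact AddConGen.Rel.of _ _ ⟨q, t, h l, rfl, rfl⟩

end Upsilon

universe u v w x y

section AuxLemmas

variable {T : Type*} [Semiring T] {Q : Type*} [AddCommMonoid Q] [Module Tᵐᵒᵖ Q]

lemma balancedCongr_mk_tmul {X Y : Type*} [AddCommMonoid X] [Module T X]
    [AddCommMonoid Y] [Module T Y] (f : X →ₗ[T] Y) (q : Q) (x : X) :
    balancedCongr T Q f ((balancedCon T Q X).mk' (q ⊗ₜ[ℕ] x))
      = (balancedCon T Q Y).mk' (q ⊗ₜ[ℕ] f x) := rfl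

lemma upsilonFun_mk_tmul {S : Type*} [Semiring S]
    {L : Type*} [AddCommMonoid L] [Module Sᵐᵒᵖ L]
    {K : Type*} [AddCommMonoid K] [Module T K] [Module Sᵐᵒᵖ K]
    [SMulCommClass Sᵐᵒᵖ T K] (q : Q) (h : L →ₗ[Sᵐᵒᵖ] K) (l : L) :
    upsilonFun T S Q L K ((balancedCon T Q (L →ₗ[Sᵐᵒᵖ] K)).mk' (q ⊗ₜ[ℕ] h)) l
      = (balancedCon T Q K).mk' (q ⊗ₜ[ℕ] h l) := rfl

end AuxLemmas

theorem upsilon_injective_of_monoflat_of_fg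
    (T : Type u) [Semiring T] (S : Type v) [Semiring S]
    (L : Type w) [AddCommMonoid L] [Module Sᵐᵒᵖ L]
    (K : Type x) [AddCommMonoid K] [Module T K] [Module Sᵐᵒᵖ K]
    [SMulCommClass Sᵐᵒᵖ T K]
    (Q : Type y) [AddCommMonoid Q] [Module Tᵐᵒᵖ Q]
    -- `Q` is a mono-flat right `T`-semimodule
    (hQ : ∀ (X Y : Type (max w x)) [AddCommMonoid X] [Module T X]
      [AddCommMonoid Y] [Module T Y] (f : X →ₗ[T] Y),
      Function.Injective f → Function.Injective (balancedCongr T Q f))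
    -- `L` is a finitely generated right `S`-semimodule
    (hL : Module.Finite Sᵐᵒᵖ L) :
    Function.Injective (upsilonFun T S Q L K) := by
  classical
  obtain ⟨n, l, hl⟩ := Module.Finite.exists_fin (R := Sᵐᵒᵖ) (M := L)
  -- the evaluation map on the generators
  let e : (L →ₗ[Sᵐᵒᵖ] K) →ₗ[T] (Fin n → ULift.{max w x} K) :=
    { toFun := fun h i => ULift.up (h (l i))
      map_add' := fun h h' => funext fun i => rfl
      map_smul' := fun t h => funext fun i => by
        ext
        simp [ULift.smul_def] }
  have he : Function.Injective e := by
    intro h h' hh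
    have key : ∀ z ∈ Submodule.span Sᵐᵒᵖ (Set.range l), h z = h' z := by
      intro z hz
      induction hz using Submodule.span_induction with
      | mem z hz =>
          obtain ⟨i, rfl⟩ := hz
          exact congrArg ULift.down (congrFun hh i)
      | zero => simp
      | add _ _ _ _ h1 h2 => simp [h1, h2]
      | smul _ _ _ h1 => simp [h1]
    exact LinearMap.ext fun z => key z (hl ▸ Submodule.mem_top)
  let proj : ∀ _ : Fin n, (Fin n → ULift.{max w x} K) →ₗ[T] K := fun i =>
    (ULift.moduleEquiv : ULift.{max w x} K ≃ₗ[T] K).toLinearMap.comp (LinearMap.proj i)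
  let incl : ∀ _ : Fin n, K →ₗ[T] (Fin n → ULift.{max w x} K) := fun i =>
    (LinearMap.single T (fun _ : Fin n => ULift.{max w x} K) i).comp
      (ULift.moduleEquiv : ULift.{max w x} K ≃ₗ[T] K).symm.toLinearMap
  -- `Q ⊗ Kⁿ → (Q ⊗ K)ⁿ` componentwise maps are jointly injective
  have hA : ∀ z : BalancedTensor T Q (Fin n → ULift.{max w x} K),
      ∑ i, balancedCongr T Q (incl i) (balancedCongr T Q (proj i) z) = z := by
    intro z
    obtain ⟨w, rfl⟩ := AddCon.mk'_surjective z
    induction w using TensorProduct.induction_on with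
    | zero => simp
    | tmul q f =>
        have step : ∀ i, balancedCongr T Q (incl i)
            (balancedCongr T Q (proj i)
              ((balancedCon T Q (Fin n → ULift.{max w x} K)).mk' (q ⊗ₜ[ℕ] f)))
            = (balancedCon T Q (Fin n → ULift.{max w x} K)).mk'
                (q ⊗ₜ[ℕ] Pi.single i (f i)) := by
          intro i
          rw [balancedCongr_mk_tmul, balancedCongr_mk_tmul]
          rfl
        rw [Finset.sum_congr rfl fun i _ => step i, ← map_sum, ← tmul_sum]
        congr 2
        exact Finset.univ_sum_single f
    | add w₁ w₂ h1 h2 =>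
        rw [map_add]
        calc ∑ i, balancedCongr T Q (incl i) (balancedCongr T Q (proj i)
              ((balancedCon T Q (Fin n → ULift.{max w x} K)).mk' w₁
                + (balancedCon T Q (Fin n → ULift.{max w x} K)).mk' w₂))
            = (∑ i, balancedCongr T Q (incl i) (balancedCongr T Q (proj i)
                ((balancedCon T Q (Fin n → ULift.{max w x} K)).mk' w₁)))
              + ∑ i, balancedCongr T Q (incl i) (balancedCongr T Q (proj i)
                ((balancedCon T Q (Fin n → ULift.{max w x} K)).mk' w₂)) := by
              rw [← Finset.sum_add_distrib]
              exact Finset.sum_congr rfl fun i _ => by rw [map_add, map_add]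
          _ = _ := by rw [h1, h2]
  -- relating the composite with `υ`
  have hB : ∀ (z : BalancedTensor T Q (L →ₗ[Sᵐᵒᵖ] K)) (i : Fin n),
      balancedCongr T Q (proj i) (balancedCongr T Q e z)
        = upsilonFun T S Q L K z (l i) := by
    intro z i
    obtain ⟨w, rfl⟩ := AddCon.mk'_surjective z
    induction w using TensorProduct.induction_on with
    | zero => simp
    | tmul q h =>
        rw [balancedCongr_mk_tmul, balancedCongr_mk_tmul, upsilonFun_mk_tmul]
        rfl
    | add w₁ w₂ h1 h2 =>
        rw [map_add, map_add, map_add, map_add, Pi.add_apply, h1, h2]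
  intro a b hab
  apply hQ _ _ e he
  have hcomp : ∀ i, balancedCongr T Q (proj i) (balancedCongr T Q e a)
      = balancedCongr T Q (proj i) (balancedCongr T Q e b) := by
    intro i
    rw [hB a i, hB b i, hab]
  calc balancedCongr T Q e a
      = ∑ i, balancedCongr T Q (incl i)
          (balancedCongr T Q (proj i) (balancedCongr T Q e a)) := (hA _).symm
    _ = ∑ i, balancedCongr T Q (incl i)
          (balancedCongr T Q (proj i) (balancedCongr T Q e b)) :=
        Finset.sum_congr rfl fun i _ => by rw [hcomp i]
    _ = balancedCongr T Q e b := hA _
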